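/- (Nondegeneracy of heteroclinic orbits, Theorem 1.) Let e: ℝ → ℂ be a heteroclinic orbit of W connecting two distinct zeros a^± of f, i.e. a C² solution of e''(x) = ∇W(e(x)) with lim_{x→±∞} e(x) = a^±, f(a^±) = 0, a^− ≠ a^+, and lim_{x→±∞} e'(x) = 0; assume the Hessians D²W(a^±) are positive definite (equivalently, since f(a^±)=0, that f'(a^±) ≠ 0). Let h: ℝ → ℂ be a C² map such that h and h' are square-integrable on ℝ, h(x) → 0 and h'(x) → 0 as x → ±∞, and h''(x) = D²W(e(x))·h(x) for all x ∈ ℝ. Then there exists a constant λ ∈ ℝ such that h(x) = λ·e'(x) for all x ∈ ℝ. -/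

import Mathlib

open MeasureTheory Complex Filter ComplexConjugate

/-- `W(z) = |f(z)|²` as a function of two real variables. -/
noncomputable def W (f : ℂ → ℂ) (z : ℂ) : ℝ := ‖f z‖ ^ 2

noncomputable def WD (f : ℂ → ℂ) (z : ℂ) : ℂ →L[ℝ] ℝ :=
  Complex.reCLM.comp ((ContinuousLinearMap.mul ℝ ℂ) (2 * conj (f z) * deriv f z))

lemma WD_apply (f : ℂ → ℂ) (z v : ℂ) :
    WD f z v = (2 * conj (f z) * deriv f z * v).re := rfl

lemma clm_ext_c {M N : ℂ →L[ℝ] ℝ} (h1 : M 1 = N 1) (hI : M I = N I) : M = N := by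
  ext v
  have hv : v = v.re • (1:ℂ) + v.im • I := by
    simp [real_smul, Complex.ext_iff]
  rw [hv, map_add, map_add, M.map_smul, M.map_smul, N.map_smul, N.map_smul, h1, hI]

lemma hasFDerivAt_W (f : ℂ → ℂ) (hf : Differentiable ℂ f) (z : ℂ) :
    HasFDerivAt (W f) (WD f z) z := by
  have hd : HasDerivAt f (deriv f z) z := (hf z).hasDerivAt
  have h1 : HasFDerivAt f (((1 : ℂ →L[ℂ] ℂ).smulRight (deriv f z)).restrictScalars ℝ) z :=
    (hd.hasFDerivAt).restrictScalars ℝ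
  have hconj : HasFDerivAt (fun w => conj (f w))
      ((Complex.conjCLE.toContinuousLinearMap).comp
        (((1 : ℂ →L[ℂ] ℂ).smulRight (deriv f z)).restrictScalars ℝ)) z :=
    (Complex.conjCLE.toContinuousLinearMap.hasFDerivAt).comp z h1
  have hmul := hconj.mul h1
  have hre := (Complex.reCLM.hasFDerivAt).comp z hmul
  have hWeq : W f = fun w => Complex.reCLM (conj (f w) * f w) := by
    funext w
    simp [W, ← Complex.normSq_eq_norm_sq, Complex.normSq_eq_conj_mul_self, Complex.normSq_apply]
  rw [hWeq]
  refine hre.congr_fderiv (Eq.symm ?_)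
  apply clm_ext_c <;>
    simp [WD_apply, Complex.ext_iff, Complex.mul_re, Complex.mul_im] <;> ring

lemma gradient_W (f : ℂ → ℂ) (hf : Differentiable ℂ f) (z : ℂ) :
    gradient (W f) z = 2 * f z * conj (deriv f z) := by
  have hg : HasGradientAt (W f) (2 * f z * conj (deriv f z)) z := by
    rw [hasGradientAt_iff_hasFDerivAt]
    refine (hasFDerivAt_W f hf z).congr_fderiv (Eq.symm ?_)
    apply clm_ext_c <;>
      simp [InnerProductSpace.toDual_apply_apply, Complex.inner, WD_apply,
        Complex.mul_re, Complex.mul_im] <;> ring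
  exact hg.gradient

lemma deriv_entire (f : ℂ → ℂ) (hf : Differentiable ℂ f) : Differentiable ℂ (deriv f) := by
  have h := ((hf.differentiableOn : DifferentiableOn ℂ f Set.univ).analyticOnNhd
    isOpen_univ).deriv
  exact differentiableOn_univ.mp h.differentiableOn

lemma clm_ext_c' {M N : ℂ →L[ℝ] ℂ} (h1 : M 1 = N 1) (hI : M I = N I) : M = N := by
  ext v
  have hv : v = v.re • (1:ℂ) + v.im • I := by
    simp [real_smul, Complex.ext_iff]
  rw [hv, map_add, map_add, M.map_smul, M.map_smul, N.map_smul, N.map_smul, h1, hI]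

noncomputable def WG (f : ℂ → ℂ) (z : ℂ) : ℂ →L[ℝ] ℂ :=
  (ContinuousLinearMap.mul ℝ ℂ) (2 * conj (f z) * deriv (deriv f) z) +
  ((ContinuousLinearMap.mul ℝ ℂ) (2 * conj (deriv f z) * deriv f z)).comp
    (Complex.conjCLE.toContinuousLinearMap)

lemma WG_apply (f : ℂ → ℂ) (z u : ℂ) :
    WG f z u = 2 * conj (f z) * deriv (deriv f) z * u
      + 2 * conj (deriv f z) * deriv f z * conj u := rfl

lemma hasFDerivAt_WDfun (f : ℂ → ℂ) (hf : Differentiable ℂ f) (z : ℂ) :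
    HasFDerivAt (fun w => 2 * conj (f w) * deriv f w) (WG f z) z := by
  have hd : HasDerivAt f (deriv f z) z := (hf z).hasDerivAt
  have h1 : HasFDerivAt f (((1 : ℂ →L[ℂ] ℂ).smulRight (deriv f z)).restrictScalars ℝ) z :=
    (hd.hasFDerivAt).restrictScalars ℝ
  have hdf := deriv_entire f hf
  have h2 : HasFDerivAt (deriv f)
      (((1 : ℂ →L[ℂ] ℂ).smulRight (deriv (deriv f) z)).restrictScalars ℝ) z :=
    ((hdf z).hasDerivAt.hasFDerivAt).restrictScalars ℝ
  have hconj : HasFDerivAt (fun w => conj (f w))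
      ((Complex.conjCLE.toContinuousLinearMap).comp
        (((1 : ℂ →L[ℂ] ℂ).smulRight (deriv f z)).restrictScalars ℝ)) z :=
    (Complex.conjCLE.toContinuousLinearMap.hasFDerivAt).comp z h1
  have hc2 := (hconj.const_mul (2:ℂ)).mul h2
  refine hc2.congr_fderiv (Eq.symm ?_)
  apply clm_ext_c' <;>
  · simp [WG_apply, Complex.ext_iff, Complex.mul_re, Complex.mul_im]
    try constructor <;> ring

noncomputable def ΘW : ℂ →L[ℝ] ℂ →L[ℝ] ℝ :=
  (ContinuousLinearMap.compL ℝ ℂ ℂ ℝ Complex.reCLM).comp (ContinuousLinearMap.mul ℝ ℂ)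

lemma fderiv2_W (f : ℂ → ℂ) (hf : Differentiable ℂ f) (z u k : ℂ) :
    fderiv ℝ (fderiv ℝ (W f)) z u k
      = ((2 * conj (f z) * deriv (deriv f) z * u
          + 2 * conj (deriv f z) * deriv f z * conj u) * k).re := by
  have hW1 : fderiv ℝ (W f) = fun w => ΘW (2 * conj (f w) * deriv f w) := by
    funext w
    exact (hasFDerivAt_W f hf w).fderiv
  have hΘ : HasFDerivAt (fun w => ΘW (2 * conj (f w) * deriv f w))
      (ΘW.comp (WG f z)) z := ΘW.hasFDerivAt.comp z (hasFDerivAt_WDfun f hf z)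
  rw [hW1, hΘ.fderiv]
  simp [ΘW, WG_apply, Complex.add_re, Complex.mul_re, Complex.mul_im]
  ring

lemma eq_of_re_forall {a b : ℂ}
    (hre : ∀ k : ℂ, ((starRingEnd ℂ) a * k).re = ((starRingEnd ℂ) b * k).re) : a = b := by
  have h1 := hre 1
  have hI := hre I
  simp [Complex.mul_re, Complex.mul_im] at h1 hI
  exact Complex.ext h1 hI

lemma HasDerivAt.cconj {g : ℝ → ℂ} {g' : ℂ} {x : ℝ} (hg : HasDerivAt g g' x) :
    HasDerivAt (fun t => conj (g t)) (conj g') x := by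
  exact (Complex.conjCLE.toContinuousLinearMap.hasFDerivAt.comp_hasDerivAt x hg)

lemma HasDerivAt.creal {g : ℝ → ℂ} {g' : ℂ} {x : ℝ} (hg : HasDerivAt g g' x) :
    HasDerivAt (fun t => (g t).re) g'.re x := by
  exact (Complex.reCLM.hasFDerivAt.comp_hasDerivAt x hg)

lemma HasDerivAt.cimag {g : ℝ → ℂ} {g' : ℂ} {x : ℝ} (hg : HasDerivAt g g' x) :
    HasDerivAt (fun t => (g t).im) g'.im x := by
  exact (Complex.imCLM.hasFDerivAt.comp_hasDerivAt x hg)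

lemma HasDerivAt.cnormSq {g : ℝ → ℂ} {g' : ℂ} {x : ℝ} (hg : HasDerivAt g g' x) :
    HasDerivAt (fun t => Complex.normSq (g t)) (2 * ((conj (g x)) * g').re) x := by
  have h := (hg.cconj.mul hg).creal
  have : ∀ t, Complex.normSq (g t) = (conj (g t) * g t).re := by
    intro t; simp [Complex.normSq_apply, Complex.mul_re]
  simp only [Pi.mul_apply, ← this] at h
  refine h.congr_deriv (Eq.symm ?_)
  simp [Complex.mul_re, Complex.mul_im]
  ring

/-- Nondegeneracy of heteroclinic orbits (Theorem 1).  Let `e` be a heteroclinic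
orbit of `W` connecting two distinct zeros `a^±` of `f` (a `C²` solution of
`e'' = ∇W(e)` with `e → a^±`, `e' → 0` at `±∞`), with positive definite Hessians
`D²W(a^±)`.  If `h` is a `C²` map with `h, h' ∈ L²`, `h → 0`, `h' → 0` at `±∞`,
solving the linearized equation `h'' = D²W(e)·h` (the Hessian acting as a
real-linear map, characterized by `Re(conj(h'') k) = D²W(e)(h, k)` for all `k`),
then `h = λ e'` for a real constant `λ`. -/
theorem statement13 (f : ℂ → ℂ) (hf : Differentiable ℂ f)
    (e : ℝ → ℂ) (he : ContDiff ℝ 2 e)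
    (hODE : ∀ x : ℝ, deriv (deriv e) x = gradient (W f) (e x))
    (aminus aplus : ℂ) (hfm : f aminus = 0) (hfp : f aplus = 0) (hne : aminus ≠ aplus)
    (hlimB : Tendsto e atBot (nhds aminus)) (hlimT : Tendsto e atTop (nhds aplus))
    (hlimB' : Tendsto (deriv e) atBot (nhds 0)) (hlimT' : Tendsto (deriv e) atTop (nhds 0))
    (hposB : ∀ v : ℂ, v ≠ 0 → 0 < fderiv ℝ (fderiv ℝ (W f)) aminus v v)
    (hposT : ∀ v : ℂ, v ≠ 0 → 0 < fderiv ℝ (fderiv ℝ (W f)) aplus v v)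
    (h : ℝ → ℂ) (hh : ContDiff ℝ 2 h)
    (hL2 : MemLp h 2 volume) (hL2' : MemLp (deriv h) 2 volume)
    (hh0B : Tendsto h atBot (nhds 0)) (hh0T : Tendsto h atTop (nhds 0))
    (hh1B : Tendsto (deriv h) atBot (nhds 0)) (hh1T : Tendsto (deriv h) atTop (nhds 0))
    (hlin : ∀ x : ℝ, ∀ k : ℂ,
      ((starRingEnd ℂ) (deriv (deriv h) x) * k).re
        = fderiv ℝ (fderiv ℝ (W f)) (e x) (h x) k) :
    ∃ lam : ℝ, ∀ x : ℝ, h x = (lam : ℂ) * deriv e x := by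
  have hdf : Differentiable ℂ (deriv f) := deriv_entire f hf
  have hddf : Differentiable ℂ (deriv (deriv f)) := deriv_entire _ hdf
  -- basic differentiability of e and h
  have heD : Differentiable ℝ e := he.differentiable (by norm_num)
  have he' : ContDiff ℝ (1 + 1) e := by norm_num at he ⊢; exact he
  have he1D : Differentiable ℝ (deriv e) :=
    ((contDiff_succ_iff_deriv.mp he').2.2).differentiable (by norm_num)
  have hhD : Differentiable ℝ h := hh.differentiable (by norm_num)
  have hh' : ContDiff ℝ (1 + 1) h := by norm_num at hh ⊢; exact hh
  have hh1D : Differentiable ℝ (deriv h) :=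
    ((contDiff_succ_iff_deriv.mp hh').2.2).differentiable (by norm_num)
  -- the second-order ODE in complex form
  have hODE' : ∀ x, HasDerivAt (deriv e) (2 * f (e x) * conj (deriv f (e x))) x := by
    intro x
    have := (he1D x).hasDerivAt
    rwa [hODE x, gradient_W f hf] at this
  have hede : ∀ x : ℝ, HasDerivAt e (deriv e x) x := fun x => (heD x).hasDerivAt
  have hfe' : ∀ x : ℝ, HasDerivAt (fun t => f (e t)) (deriv f (e x) * deriv e x) x :=
    fun x => ((hf (e x)).hasDerivAt).comp x (hede x)
  have hdfe' : ∀ x : ℝ, HasDerivAt (fun t => deriv f (e t))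
      (deriv (deriv f) (e x) * deriv e x) x :=
    fun x => ((hdf (e x)).hasDerivAt).comp x (hede x)
  -- energy identity
  have energy : ∀ x : ℝ, normSq (deriv e x) = 2 * normSq (f (e x)) := by
    set N : ℝ → ℝ := fun x => normSq (deriv e x) - 2 * normSq (f (e x)) with hN_def
    have hN : ∀ x, HasDerivAt N 0 x := by
      intro x
      have h1 := (hODE' x).cnormSq
      have h2 := (hfe' x).cnormSq
      have := h1.sub ((h2.const_mul (2:ℝ)))
      refine this.congr_deriv (Eq.symm ?_)
      simp [Complex.mul_re, Complex.mul_im]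
      ring
    have hNc : ∀ x, N x = N 0 :=
      fun x => is_const_of_deriv_eq_zero (fun y => (hN y).differentiableAt)
        (fun y => (hN y).deriv) x 0
    have hNtop : Tendsto N atTop (nhds 0) := by
      have h1 : Tendsto (fun x => normSq (deriv e x)) atTop (nhds 0) := by
        simpa [Function.comp_def] using (Complex.continuous_normSq.tendsto 0).comp hlimT'
      have h2 : Tendsto (fun x => normSq (f (e x))) atTop (nhds 0) := by
        have : Tendsto (fun x => f (e x)) atTop (nhds 0) := by
          simpa [hfp, Function.comp_def] using (hf.continuous.tendsto aplus).comp hlimT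
        simpa [Function.comp_def] using (Complex.continuous_normSq.tendsto 0).comp this
      simpa using h1.sub (h2.const_mul 2)
    have hN0 : N 0 = 0 := by
      have : Tendsto N atTop (nhds (N 0)) := by
        have : N = fun _ => N 0 := funext hNc
        rw [this]; exact tendsto_const_nhds
      exact tendsto_nhds_unique this hNtop
    intro x
    have := hNc x
    rw [hN0] at this
    simpa [hN_def, sub_eq_zero] using this
  -- f does not vanish along e
  have hfe_ne : ∀ x : ℝ, f (e x) ≠ 0 := by
    intro x0 hfe0
    have he10 : deriv e x0 = 0 := by
      have := energy x0
      rw [hfe0] at this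
      simpa using this
    set a0 : ℂ := e x0 with ha0
    set S : Set ℝ := {x : ℝ | e x = a0 ∧ deriv e x = 0} with hS_def
    have hSclosed : IsClosed S := by
      have : S = (fun x => (e x, deriv e x)) ⁻¹' {(a0, (0:ℂ))} := by
        ext x; simp [hS_def, Prod.ext_iff]
      rw [this]
      exact (isClosed_singleton).preimage (heD.continuous.prodMk he1D.continuous)
    have hSopen : IsOpen S := by
      rw [isOpen_iff_mem_nhds]
      intro x1 hx1
      set F : ℂ × ℂ → ℂ × ℂ := fun p => (p.2, 2 * f p.1 * conj (deriv f p.1)) with hF_def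
      have hFC : ContDiff ℝ 1 F := by
        apply ContDiff.prodMk
        · exact contDiff_snd
        · have h1 : ContDiff ℝ 1 (fun z : ℂ => 2 * f z * conj (deriv f z)) :=
            (contDiff_const.mul ((hf.contDiff).restrict_scalars ℝ)).mul
              ((Complex.conjCLE.toContinuousLinearMap.contDiff).comp
                ((hdf.contDiff).restrict_scalars ℝ))
          exact h1.comp contDiff_fst
      obtain ⟨K, t, ht, hlip⟩ :=
        (hFC.contDiffAt (x := (a0, (0:ℂ)))).exists_lipschitzOnWith
      have hu : ∀ x : ℝ, HasDerivAt (fun s => (e s, deriv e s))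
          (F (e x, deriv e x)) x := fun x => (hede x).prodMk (hODE' x)
      have hF0 : F (a0, 0) = 0 := by
        have hfa0 : f a0 = 0 := hfe0
        simp [hF_def, hfa0, Prod.ext_iff]
      have hucont : ContinuousAt (fun s : ℝ => (e s, deriv e s)) x1 :=
        (heD.continuous.prodMk he1D.continuous).continuousAt
      have hux1 : (e x1, deriv e x1) = (a0, (0:ℂ)) := by
        have := hx1
        simp only [hS_def, Set.mem_setOf_eq] at this
        simp [this.1, this.2]
      have hevf : ∀ᶠ x in nhds x1,
          HasDerivAt (fun s => (e s, deriv e s)) (F (e x, deriv e x)) x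
            ∧ (e x, deriv e x) ∈ t := by
        have hmem : ∀ᶠ x in nhds x1, (e x, deriv e x) ∈ t := by
          have : (fun s : ℝ => (e s, deriv e s)) ⁻¹' t ∈ nhds x1 :=
            hucont.preimage_mem_nhds (by rwa [hux1])
          exact this
        filter_upwards [hmem] with x hx using ⟨hu x, hx⟩
      have hevg : ∀ᶠ x in nhds x1,
          HasDerivAt (fun _ : ℝ => (a0, (0:ℂ))) (F (a0, 0)) x ∧ (a0, (0:ℂ)) ∈ t := by
        apply Filter.Eventually.of_forall
        intro x
        refine ⟨?_, mem_of_mem_nhds ht⟩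
        rw [hF0]
        exact hasDerivAt_const x _
      have heqev := ODE_solution_unique_of_eventually
        (v := fun _ : ℝ => F) (s := fun _ => t) (K := K)
        (Filter.Eventually.of_forall fun _ => hlip) hevf hevg hux1
      rw [← Filter.eventually_iff]
      filter_upwards [heqev] with x hx
      have hx' : (e x, deriv e x) = (a0, (0:ℂ)) := hx
      exact ⟨congrArg Prod.fst hx', congrArg Prod.snd hx'⟩
    have hSuniv : S = Set.univ :=
      IsClopen.eq_univ ⟨hSclosed, hSopen⟩ ⟨x0, ⟨rfl, he10⟩⟩
    have hec : ∀ x : ℝ, e x = a0 := by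
      intro x
      have : x ∈ S := hSuniv ▸ Set.mem_univ x
      exact this.1
    have heB : aminus = a0 := by
      have h1 : Tendsto e atBot (nhds a0) := by
        have : e = fun _ => a0 := funext hec
        rw [this]; exact tendsto_const_nhds
      exact tendsto_nhds_unique hlimB h1
    have heT : aplus = a0 := by
      have h1 : Tendsto e atTop (nhds a0) := by
        have : e = fun _ => a0 := funext hec
        rw [this]; exact tendsto_const_nhds
      exact tendsto_nhds_unique hlimT h1
    exact hne (heB.trans heT.symm)
  have he1_ne : ∀ x : ℝ, deriv e x ≠ 0 := by
    intro x hx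
    apply hfe_ne x
    have := energy x
    rw [hx] at this
    simp at this
    exact this
  -- the constant c0 with e' = c0 * conj (f ∘ e)
  have hfec_ne : ∀ x : ℝ, conj (f (e x)) ≠ 0 := by
    intro x hx
    apply hfe_ne x
    simpa using congrArg conj hx
  set c : ℝ → ℂ := fun x => deriv e x / conj (f (e x)) with hc_def
  have hkey : ∀ x : ℝ, deriv e x * conj (deriv e x)
      = 2 * (f (e x) * conj (f (e x))) := by
    intro x
    rw [Complex.mul_conj, Complex.mul_conj]
    exact_mod_cast congrArg (fun r : ℝ => (r : ℂ)) (energy x)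
  have hc' : ∀ x, HasDerivAt c 0 x := by
    intro x
    have hconj : HasDerivAt (fun t => conj (f (e t)))
        (conj (deriv f (e x) * deriv e x)) x := (hfe' x).cconj
    have hdiv := (hODE' x).div hconj (hfec_ne x)
    refine hdiv.congr_deriv (Eq.symm ?_)
    rw [eq_comm, div_eq_zero_iff]
    left
    simp only [map_mul]
    linear_combination (-(conj (deriv f (e x)))) * hkey x
  obtain ⟨c0, hc0⟩ : ∃ c0 : ℂ, ∀ x, c x = c0 :=
    ⟨c 0, fun x => is_const_of_deriv_eq_zero
      (fun y => (hc' y).differentiableAt) (fun y => (hc' y).deriv) x 0⟩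
  have he1 : ∀ x, deriv e x = c0 * conj (f (e x)) := by
    intro x
    have hx := hc0 x
    rw [hc_def] at hx
    rw [div_eq_iff (hfec_ne x)] at hx
    exact hx
  have he1c : ∀ x, conj (deriv e x) = conj c0 * f (e x) := by
    intro x
    have := congrArg conj (he1 x)
    simpa [map_mul] using this
  have hcc : c0 * conj c0 = 2 := by
    have k1 := hkey 0
    rw [he1 0] at k1
    simp only [map_mul, Complex.conj_conj] at k1
    have hne0 : f (e 0) * conj (f (e 0)) ≠ 0 := mul_ne_zero (hfe_ne 0) (hfec_ne 0)
    apply mul_right_cancel₀ hne0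
    linear_combination k1
  -- the linearized equation in complex form
  have hheq : ∀ x : ℝ, deriv (deriv h) x
      = 2 * (deriv f (e x) * conj (deriv f (e x))) * h x
        + 2 * f (e x) * conj (deriv (deriv f) (e x) * h x) := by
    intro x
    apply eq_of_re_forall
    intro k
    rw [hlin x k, fderiv2_W f hf]
    congr 1
    simp only [map_add, map_mul, Complex.conj_conj, map_ofNat]
    ring
  -- the first order operator A
  set A : ℝ → ℂ := fun x => deriv h x - c0 * conj (deriv f (e x) * h x) with hA_def
  have hA' : ∀ x, HasDerivAt A (-(c0 * conj (deriv f (e x)) * conj (A x))) x := by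
    intro x
    have h2 : HasDerivAt (deriv h) (deriv (deriv h) x) x := (hh1D x).hasDerivAt
    have h3 : HasDerivAt (fun t => deriv f (e t) * h t)
        (deriv (deriv f) (e x) * deriv e x * h x + deriv f (e x) * deriv h x) x :=
      (hdfe' x).mul (hhD x).hasDerivAt
    have h4 := h2.sub (HasDerivAt.const_mul c0 h3.cconj)
    refine h4.congr_deriv (Eq.symm ?_)
    rw [hheq x]
    simp only [hA_def, map_mul, map_add, map_sub, Complex.conj_conj]
    linear_combination (deriv f (e x) * conj (deriv f (e x)) * h x
        + f (e x) * conj (deriv (deriv f) (e x)) * conj (h x)) * hcc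
      + (c0 * conj (deriv (deriv f) (e x)) * conj (h x)) * he1c x
  -- the quantity φ = Re(conj A * h) is monotone with zero limits
  set φ : ℝ → ℝ := fun x => (conj (A x) * h x).re with hφ_def
  have hφ' : ∀ x, HasDerivAt φ (normSq (A x)) x := by
    intro x
    have h5 := ((hA' x).cconj.mul (hhD x).hasDerivAt).creal
    refine h5.congr_deriv (Eq.symm ?_)
    simp only [hA_def, map_mul, map_neg, map_sub, Complex.conj_conj]
    simp only [Complex.normSq_apply, Complex.mul_re, Complex.mul_im, Complex.add_re,
      Complex.add_im, Complex.sub_re, Complex.sub_im, Complex.neg_re, Complex.neg_im,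
      Complex.conj_re, Complex.conj_im]
    ring
  have hdcont : Continuous (fun x => deriv f (e x)) :=
    (hdf.continuous).comp heD.continuous
  have hAtop : Tendsto A atTop (nhds 0) := by
    have h1 : Tendsto (fun x => deriv f (e x) * h x) atTop (nhds 0) := by
      have := ((hdf.continuous.tendsto aplus).comp hlimT).mul hh0T
      simpa using this
    have h2 : Tendsto (fun x => conj (deriv f (e x) * h x)) atTop (nhds 0) := by
      have := (Complex.continuous_conj.tendsto 0).comp h1
      simpa [Function.comp_def] using this
    have := hh1T.sub (h2.const_mul c0)
    simpa [hA_def] using this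
  have hAbot : Tendsto A atBot (nhds 0) := by
    have h1 : Tendsto (fun x => deriv f (e x) * h x) atBot (nhds 0) := by
      have := ((hdf.continuous.tendsto aminus).comp hlimB).mul hh0B
      simpa using this
    have h2 : Tendsto (fun x => conj (deriv f (e x) * h x)) atBot (nhds 0) := by
      have := (Complex.continuous_conj.tendsto 0).comp h1
      simpa [Function.comp_def] using this
    have := hh1B.sub (h2.const_mul c0)
    simpa [hA_def] using this
  have hφtop : Tendsto φ atTop (nhds 0) := by
    have h1 : Tendsto (fun x => conj (A x) * h x) atTop (nhds 0) := by
      have := ((Complex.continuous_conj.tendsto 0).comp hAtop).mul hh0T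
      simpa using this
    have := (Complex.continuous_re.tendsto 0).comp h1
    simpa [hφ_def, Function.comp_def] using this
  have hφbot : Tendsto φ atBot (nhds 0) := by
    have h1 : Tendsto (fun x => conj (A x) * h x) atBot (nhds 0) := by
      have := ((Complex.continuous_conj.tendsto 0).comp hAbot).mul hh0B
      simpa using this
    have := (Complex.continuous_re.tendsto 0).comp h1
    simpa [hφ_def, Function.comp_def] using this
  have hφmono : Monotone φ :=
    monotone_of_deriv_nonneg (fun x => (hφ' x).differentiableAt)
      (fun x => by rw [(hφ' x).deriv]; exact Complex.normSq_nonneg _)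
  have hφ0 : ∀ x, φ x = 0 := by
    intro x
    have hle : φ x ≤ 0 := hφmono.ge_of_tendsto hφtop x
    have hge : 0 ≤ φ x := hφmono.le_of_tendsto hφbot x
    linarith
  have hA0 : ∀ x, A x = 0 := by
    intro x
    have hd : deriv φ x = normSq (A x) := (hφ' x).deriv
    have : deriv φ x = 0 := by
      have : φ = fun _ => (0:ℝ) := funext hφ0
      rw [this]
      simp
    rw [this] at hd
    exact Complex.normSq_eq_zero.mp hd.symm
  have hAh : ∀ x, deriv h x = c0 * conj (deriv f (e x) * h x) := by
    intro x
    have := hA0 x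
    rw [hA_def] at this
    exact sub_eq_zero.mp this
  -- the Wronskian ω = Im(conj e' * h) vanishes
  set ω : ℝ → ℝ := fun x => (conj (deriv e x) * h x).im with hω_def
  have hω' : ∀ x, HasDerivAt ω 0 x := by
    intro x
    have h6 : HasDerivAt (fun t => conj (deriv e t))
        (conj (2 * f (e x) * conj (deriv f (e x)))) x := (hODE' x).cconj
    have h7 := (h6.mul (hhD x).hasDerivAt).cimag
    refine h7.congr_deriv (Eq.symm ?_)
    rw [hAh x]
    have key2 : conj (2 * f (e x) * conj (deriv f (e x))) * h x
        + conj (deriv e x) * (c0 * conj (deriv f (e x) * h x))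
        = (2 * conj (f (e x)) * deriv f (e x) * h x)
          + conj (2 * conj (f (e x)) * deriv f (e x) * h x) := by
      simp only [map_mul, Complex.conj_conj, map_ofNat]
      linear_combination (c0 * conj (deriv f (e x)) * conj (h x)) * he1c x
        + (f (e x) * conj (deriv f (e x)) * conj (h x)) * hcc
    rw [key2]
    simp only [Complex.add_im, Complex.conj_im]
    ring
  have hωc : ∀ x, ω x = ω 0 :=
    fun x => is_const_of_deriv_eq_zero (fun y => (hω' y).differentiableAt)
      (fun y => (hω' y).deriv) x 0
  have hωtop : Tendsto ω atTop (nhds 0) := by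
    have h1 : Tendsto (fun x => conj (deriv e x) * h x) atTop (nhds 0) := by
      have := ((Complex.continuous_conj.tendsto 0).comp hlimT').mul hh0T
      simpa [Function.comp_def] using this
    have := (Complex.continuous_im.tendsto 0).comp h1
    simpa [hω_def, Function.comp_def] using this
  have hω0 : ∀ x, ω x = 0 := by
    intro x
    have h1 : Tendsto ω atTop (nhds (ω 0)) := by
      have : ω = fun _ => ω 0 := funext hωc
      rw [this]; exact tendsto_const_nhds
    rw [hωc x]
    exact tendsto_nhds_unique h1 hωtop
  -- the ratio r = h / e' is a real constant
  have himeq : ∀ x, deriv e x * conj (h x) = conj (deriv e x) * h x := by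
    intro x
    have h8 : conj (conj (deriv e x) * h x) = conj (deriv e x) * h x :=
      Complex.conj_eq_iff_im.mpr (hω0 x)
    simpa [map_mul, Complex.conj_conj, mul_comm] using h8
  set r : ℝ → ℂ := fun x => h x / deriv e x with hr_def
  have hr' : ∀ x, HasDerivAt r 0 x := by
    intro x
    have hdiv := ((hhD x).hasDerivAt).div (hODE' x) (he1_ne x)
    refine hdiv.congr_deriv (Eq.symm ?_)
    rw [eq_comm, div_eq_zero_iff]
    left
    rw [hAh x]
    simp only [map_mul]
    linear_combination (c0 * conj (deriv f (e x))) * himeq x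
      + (c0 * conj (deriv f (e x)) * h x) * he1c x
      + (f (e x) * conj (deriv f (e x)) * h x) * hcc
  have hr0 : ∀ x, r x = r 0 :=
    fun x => is_const_of_deriv_eq_zero (fun y => (hr' y).differentiableAt)
      (fun y => (hr' y).deriv) x 0
  have hrx : ∀ x, h x = r 0 * deriv e x := by
    intro x
    have hx := hr0 x
    rw [hr_def] at hx
    rw [div_eq_iff (he1_ne x)] at hx
    exact hx
  have him0 : (r 0).im = 0 := by
    have hcr : conj (r 0) = r 0 := by
      rw [hr_def]
      simp only [map_div₀]
      rw [div_eq_div_iff (by simpa using he1_ne 0) (he1_ne 0)]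
      linear_combination himeq 0
    exact Complex.conj_eq_iff_im.mp hcr
  refine ⟨(r 0).re, fun x => ?_⟩
  rw [hrx x]
  congr 1
  exact (Complex.ext (by simp) (by simp [him0])).symm
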